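/- Let c_n denote the number of n-colour self-inverse compositions of 2n into an odd number of parts. Then c_1 = 2, c_2 = 6, and c_n + c_{n−2} = 3·c_{n−1} for all n > 2. -/
import Mathlib


/-- An n-colour composition of `ν` is a list of pairs `(p, c)` with `1 ≤ c ≤ p`
whose parts `p` sum to `ν`. -/
def IsNColourComposition (ν : ℕ) (l : List (ℕ × ℕ)) : Prop :=
  (∀ pc ∈ l, 1 ≤ pc.2 ∧ pc.2 ≤ pc.1) ∧ (l.map Prod.fst).sum = ν

namespace SelfInvAux

theorem pal_decomp {α : Type*} (l : List α) (k : ℕ) (hlen : l.length = 2*k+1)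
    (hrev : l.reverse = l) :
    l = l.take k ++ l[k]'(by omega) :: (l.take k).reverse := by
  conv_lhs => rw [← List.take_append_drop k l]
  congr 1
  rw [List.drop_eq_getElem_cons (by omega)]
  congr 1
  have : List.drop (k+1) l.reverse = (l.take k).reverse := by
    rw [List.reverse_take, hrev]
    congr 1
    omega
  rw [← this, hrev]

/-- The subtype of n-colour compositions of `s`. -/
def NCC (s : ℕ) := {l : List (ℕ × ℕ) // IsNColourComposition s l}

theorem eq_nil_of_ncc_zero (l : List (ℕ × ℕ)) (h : IsNColourComposition 0 l) : l = [] := by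
  cases l with
  | nil => rfl
  | cons hd t =>
    exfalso
    have h1 := h.1 hd (by simp)
    have h2 := h.2
    simp [List.sum_cons] at h2
    omega

/-- Decompose a composition of `s+1` as head part `p+1` with colour `c+1` and a tail. -/
def headEquiv (s : ℕ) : NCC (s+1) ≃ Σ p : Fin (s+1), Fin (p.1+1) × NCC (s - p.1) where
  toFun := fun ⟨l, hl⟩ => match l, hl with
    | [], hl => absurd hl.2 (by simp)
    | (p, c) :: t, hl =>
      have hpc := hl.1 (p, c) (by simp)
      have hsum : p + (t.map Prod.fst).sum = s + 1 := by
        simpa using hl.2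
      ⟨⟨p - 1, by omega⟩, ⟨c - 1, by simp only [Fin.val_mk]; omega⟩,
        ⟨t, ⟨fun pc h => hl.1 pc (by simp [h]), by simp only [Fin.val_mk]; omega⟩⟩⟩
  invFun := fun ⟨⟨p, hp⟩, ⟨c, hc⟩, ⟨t, ht⟩⟩ =>
    ⟨(p + 1, c + 1) :: t,
      ⟨fun pc h => by
        rcases List.mem_cons.1 h with h' | h'
        · subst h'; simp at hc ⊢; omega
        · exact ht.1 pc h',
       by simp [ht.2]; omega⟩⟩
  left_inv := by
    rintro ⟨l, hl⟩
    cases l with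
    | nil => exact absurd hl.2 (by simp)
    | cons hd t =>
      obtain ⟨p, c⟩ := hd
      have hpc := hl.1 (p, c) (by simp)
      apply Subtype.ext
      simp only
      congr 2 <;> omega
  right_inv := by
    rintro ⟨⟨p, hp⟩, ⟨c, hc⟩, ⟨t, ht⟩⟩
    rfl

instance ncc_finite : ∀ s, Finite (NCC s) := by
  intro s
  induction s using Nat.strong_induction_on with
  | _ s ih =>
    match s with
    | 0 =>
      have : Subsingleton (NCC 0) := ⟨fun a b => Subtype.ext (by
        rw [eq_nil_of_ncc_zero a.1 a.2, eq_nil_of_ncc_zero b.1 b.2])⟩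
      exact Finite.of_subsingleton
    | s + 1 =>
      haveI : ∀ p : Fin (s+1), Finite (NCC (s - p.1)) := fun p => ih _ (by omega)
      exact Finite.of_equiv _ (headEquiv s).symm

theorem card_sigma' {n : ℕ} (f : Fin n → Type*) [∀ i, Finite (f i)] :
    Nat.card (Σ i, f i) = ∑ i, Nat.card (f i) := by
  letI := fun i => Fintype.ofFinite (f i)
  simp [Nat.card_eq_fintype_card, Fintype.card_sigma]

/-- the number of n-colour compositions of `s` -/
noncomputable def A (s : ℕ) : ℕ := Nat.card (NCC s)

theorem A_zero : A 0 = 1 := by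
  rw [A, Nat.card_eq_one_iff_unique]
  constructor
  · exact ⟨fun a b => Subtype.ext (by
      rw [eq_nil_of_ncc_zero a.1 a.2, eq_nil_of_ncc_zero b.1 b.2])⟩
  · exact ⟨⟨[], by constructor <;> simp⟩⟩

theorem A_conv (s : ℕ) : A (s+1) = ∑ p ∈ Finset.range (s+1), (p+1) * A (s - p) := by
  rw [A, Nat.card_congr (headEquiv s), card_sigma']
  rw [← Fin.sum_univ_eq_sum_range (fun p => (p+1) * A (s - p)) (s+1)]
  refine Finset.sum_congr rfl fun p _ => ?_
  rw [Nat.card_prod, Nat.card_eq_fintype_card (α := Fin (p.1+1)), Fintype.card_fin]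
  rfl

theorem A_conv' (s : ℕ) : A (s+1) = ∑ q ∈ Finset.range (s+1), (s+1-q) * A q := by
  rw [A_conv, ← Finset.sum_range_reflect (fun q => (s+1-q) * A q) (s+1)]
  refine Finset.sum_congr rfl fun p hp => ?_
  simp only [Finset.mem_range] at hp
  congr 1 <;> omega

theorem A_step (s : ℕ) : A (s+2) = A (s+1) + ∑ q ∈ Finset.range (s+2), A q := by
  have h1 : A (s+2) = ∑ q ∈ Finset.range (s+2), ((s+1-q) * A q + A q) := by
    rw [A_conv' (s+1)]
    refine Finset.sum_congr rfl fun q hq => ?_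
    simp only [Finset.mem_range] at hq
    have : s + 1 + 1 - q = (s + 1 - q) + 1 := by omega
    rw [this]; ring
  rw [h1, Finset.sum_add_distrib]
  congr 1
  rw [Finset.sum_range_succ, Nat.sub_self, zero_mul, add_zero, ← A_conv']

theorem A_rec (s : ℕ) : A (s+3) + A (s+1) = 3 * A (s+2) := by
  have h1 := A_step s
  have h2 := A_step (s+1)
  rw [show s+1+2 = s+3 by ring, show s+1+1 = s+2 by ring,
    Finset.sum_range_succ] at h2
  omega

/-- The type of (outer half, shifted middle colour) pairs. -/
def T (n : ℕ) := {q : List (ℕ × ℕ) × ℕ //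
    (∀ pc ∈ q.1, 1 ≤ pc.2 ∧ pc.2 ≤ pc.1) ∧
    (q.1.map Prod.fst).sum < n ∧ q.2 < 2 * (n - (q.1.map Prod.fst).sum)}

def tEquiv (n : ℕ) : T n ≃ Σ s : Fin n, NCC s.1 × Fin (2 * (n - s.1)) where
  toFun := fun ⟨(l, c), h⟩ => ⟨⟨(l.map Prod.fst).sum, h.2.1⟩, ⟨l, ⟨h.1, rfl⟩⟩, ⟨c, h.2.2⟩⟩
  invFun := fun ⟨⟨s, hs⟩, ⟨l, hl⟩, ⟨c, hc⟩⟩ =>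
    ⟨(l, c), ⟨hl.1, by rw [hl.2]; exact hs, by rw [hl.2]; exact hc⟩⟩
  left_inv := by rintro ⟨⟨l, c⟩, h⟩; rfl
  right_inv := by
    rintro ⟨⟨s, hs⟩, ⟨l, hl⟩, ⟨c, hc⟩⟩
    have h2 : (l.map Prod.fst).sum = s := hl.2
    subst h2
    rfl

/-- The palindromic odd-length compositions of `2n`. -/
def Pal (n : ℕ) := {l : List (ℕ × ℕ) //
    IsNColourComposition (2 * n) l ∧ l.reverse = l ∧ Odd l.length}

theorem pal_len (l : List (ℕ × ℕ)) (hodd : Odd l.length) :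
    l.length = 2 * (l.length / 2) + 1 := by
  rw [Nat.odd_iff] at hodd
  omega

theorem pal_key {n : ℕ} (l : List (ℕ × ℕ)) (hcomp : IsNColourComposition (2 * n) l)
    (hrev : l.reverse = l) (hodd : Odd l.length) :
    2 * ((l.take (l.length / 2)).map Prod.fst).sum
      + (l[l.length / 2]'(by have := pal_len l hodd; omega)).1 = 2 * n := by
  have hlen : l.length = 2 * (l.length / 2) + 1 := pal_len l hodd
  have hd := pal_decomp l (l.length / 2) hlen hrev
  have h2 := hcomp.2
  conv_lhs at h2 => rw [hd]
  simp only [List.map_append, List.map_cons, List.map_reverse, List.sum_append,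
    List.sum_cons, List.sum_reverse] at h2
  omega

def palEquiv (n : ℕ) : Pal n ≃ T n where
  toFun := fun x =>
    ⟨(x.1.take (x.1.length / 2),
      (x.1[x.1.length / 2]'(by have := pal_len x.1 x.2.2.2; omega)).2 - 1), by
      have hkey := pal_key x.1 x.2.1 x.2.2.1 x.2.2.2
      have hmid := x.2.1.1 _ (List.getElem_mem (l := x.1) (n := x.1.length / 2)
        (by have := pal_len x.1 x.2.2.2; omega))
      refine ⟨fun pc h => x.2.1.1 pc (List.take_subset _ _ h), ?_, ?_⟩ <;>
        · dsimp only
          omega⟩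
  invFun := fun ⟨(l, c), h⟩ =>
    ⟨l ++ (2 * (n - (l.map Prod.fst).sum), c + 1) :: l.reverse, by
      obtain ⟨hcol, hsum, hc⟩ := h
      dsimp only at hcol hsum hc
      refine ⟨⟨fun pc hm => ?_, ?_⟩, ?_, ?_⟩
      · rcases List.mem_append.1 hm with h' | h'
        · exact hcol pc h'
        · rcases List.mem_cons.1 h' with h'' | h''
          · subst h''; simp; omega
          · exact hcol pc (List.mem_reverse.1 h'')
      · simp only [List.map_append, List.map_cons, List.map_reverse, List.sum_append,
          List.sum_cons, List.sum_reverse]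
        omega
      · simp
      · rw [Nat.odd_iff]
        simp only [List.length_append, List.length_cons, List.length_reverse]
        omega⟩
  left_inv := by
    rintro ⟨l, hcomp, hrev, hodd⟩
    have hlen : l.length = 2 * (l.length / 2) + 1 := pal_len l hodd
    have hkey := pal_key (n := n) l hcomp hrev hodd
    have hmid := hcomp.1 _ (List.getElem_mem (l := l) (n := l.length / 2) (by omega))
    apply Subtype.ext
    dsimp only
    conv_rhs => rw [pal_decomp l (l.length / 2) hlen hrev]
    congr 2
    refine Prod.ext ?_ ?_ <;> dsimp only <;> omega
  right_inv := by
    rintro ⟨⟨l, c⟩, hcol, hsum, hc⟩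
    apply Subtype.ext
    have hlen : (l ++ (2 * (n - (l.map Prod.fst).sum), c + 1) :: l.reverse).length
        = 2 * l.length + 1 := by
      simp only [List.length_append, List.length_cons, List.length_reverse]; omega
    have hk : (l ++ (2 * (n - (l.map Prod.fst).sum), c + 1) :: l.reverse).length / 2
        = l.length := by omega
    simp only [hk]
    refine Prod.ext ?_ ?_
    · exact List.take_left' rfl
    · dsimp only
      rw [List.getElem_append_right (le_refl l.length)]
      simp
  
theorem card_pal (n : ℕ) :
    Nat.card (Pal n) = ∑ s ∈ Finset.range n, (2 * (n - s)) * A s := by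
  haveI : ∀ s : Fin n, Finite (NCC s.1 × Fin (2 * (n - s.1))) := fun s =>
    inferInstance
  rw [Nat.card_congr ((palEquiv n).trans (tEquiv n)), card_sigma']
  rw [← Fin.sum_univ_eq_sum_range (fun s => (2 * (n - s)) * A s) n]
  refine Finset.sum_congr rfl fun s _ => ?_
  rw [Nat.card_prod, Nat.card_eq_fintype_card (α := Fin (2 * (n - s.1))), Fintype.card_fin]
  rw [mul_comm]
  rfl

theorem card_pal_eq (m : ℕ) : Nat.card (Pal (m+1)) = 2 * A (m+1) := by
  rw [card_pal, A_conv', Finset.mul_sum]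
  refine Finset.sum_congr rfl fun q hq => ?_
  ring

end SelfInvAux

theorem selfinverse_even_oddparts_recurrence (c : ℕ → ℕ)
    (hc : ∀ n, c n = Nat.card {l : List (ℕ × ℕ) //
        IsNColourComposition (2 * n) l ∧ l.reverse = l ∧ Odd l.length}) :
    c 1 = 2 ∧ c 2 = 6 ∧ ∀ n, 2 < n → c n + c (n - 2) = 3 * c (n - 1) := by
  open SelfInvAux in
  have hc' : ∀ m : ℕ, c (m+1) = 2 * A (m+1) := fun m => by
    rw [hc (m+1)]; exact card_pal_eq m
  have hA1 : A 1 = 1 := by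
    rw [SelfInvAux.A_conv 0]
    simp [SelfInvAux.A_zero]
  have hA2 : A 2 = 3 := by
    rw [SelfInvAux.A_conv 1, Finset.sum_range_succ, Finset.sum_range_succ]
    simp [SelfInvAux.A_zero, hA1]
  refine ⟨by rw [hc' 0, hA1], by rw [hc' 1, hA2], fun n hn => ?_⟩
  obtain ⟨m, rfl⟩ : ∃ m, n = m + 3 := ⟨n - 3, by omega⟩
  have h1 : m + 3 - 2 = m + 1 := by omega
  have h2 : m + 3 - 1 = m + 2 := by omega
  have e1 : c (m+3) = 2 * A (m+3) := hc' (m+2)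
  have e2 : c (m+2) = 2 * A (m+2) := hc' (m+1)
  have e3 : c (m+1) = 2 * A (m+1) := hc' m
  rw [h1, h2, e1, e2, e3]
  have := SelfInvAux.A_rec m
  omega
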